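/- Define, for k ≥ 1, g_k(y_i,y,q) = q³·(q^{1+3k/2} χ_k(q^{-1/2}y)·(y₁+y₂+y₃) + q^{3k/2} χ_{k+2}(q^{-1/2}y) - q^{3(k+1)/2} χ_{k-1}(q^{-1/2}y) - q^{-1+3(k+1)/2} χ_{k+1}(q^{-1/2}y)·(y₁^{-1}+y₂^{-1}+y₃^{-1})) / ((1-y₁q)(1-y₂q)(1-y₃q)), together with g_{-1} = (qy + q²y^{-1} - q²∑y_i^{-1} + q³)/∏(1-y_iq) and g₀ = (q⁴∑y_i + q²(y² + q + q²y^{-2}) - q³(y + qy^{-1})∑y_i^{-1})/∏(1-y_iq). Then, as an identity of formal power series in u = q^{1/2} with coefficients that are Laurent polynomials in y₁,y₂,y₃,y divided by ∏(1-y_i u²) (the infinite sum converging u-adically since g_k has lowest order u^{2k+4}), one has ∑_{k=-1}^{∞} g_k(y_i,y,q) = (q⁴(y₁+y₂+y₃) - q²(y₁^{-1}+y₂^{-1}+y₃^{-1}) + (1-q³)(yq + y^{-1}q²)) / ((1-y₁q)(1-y₂q)(1-y₃q)(1-yq)(1-y^{-1}q²)). -/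

import Mathlib

open Finset

namespace SugraLargeN

/-- The field of fractions of polynomials in the fugacities `y₁, y₂, y₃, y`
(variables `0,1,2,3`). -/
abbrev K : Type := FractionRing (MvPolynomial (Fin 4) ℚ)

/-- The fugacities `y₁, y₂, y₃` (for `i = 0,1,2`) and `y` (for `i = 3`). -/
noncomputable def yv (i : Fin 4) : K :=
  algebraMap (MvPolynomial (Fin 4) ℚ) K (MvPolynomial.X i)

/-- We work in formal power series in `u = q^{1/2}`. -/
noncomputable abbrev u : PowerSeries K := PowerSeries.X

noncomputable def Cc : K →+* PowerSeries K := PowerSeries.C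

/-- `u^m · χ_j(u⁻¹ y)` where `χ_j(r) = ∑_{i=0}^{j} r^{j-2i}` is the sl(2) character of
highest weight `j`; for `m ≥ j` this is the polynomial `∑_i y^{j-2i} u^{m-j+2i}`. -/
noncomputable def chiTerm (m j : ℕ) : PowerSeries K :=
  ∑ i ∈ Finset.range (j + 1), Cc (yv 3 ^ ((j : ℤ) - 2 * i)) * u ^ (m - j + 2 * i)

/-- The common denominator `∏_{i=1}^{3} (1 - yᵢ q)`, with `q = u²`. -/
noncomputable def D : PowerSeries K :=
  (1 - Cc (yv 0) * u ^ 2) * (1 - Cc (yv 1) * u ^ 2) * (1 - Cc (yv 2) * u ^ 2)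

noncomputable def sumY : K := yv 0 + yv 1 + yv 2
noncomputable def sumYinv : K := (yv 0)⁻¹ + (yv 1)⁻¹ + (yv 2)⁻¹

/-- `g₋₁ = (qy + q²y⁻¹ - q²∑yᵢ⁻¹ + q³)/∏(1-yᵢq)` with `q = u²`. -/
noncomputable def gNegOne : PowerSeries K :=
  (Cc (yv 3) * u ^ 2 + Cc (yv 3)⁻¹ * u ^ 4 - Cc sumYinv * u ^ 4 + u ^ 6) * D⁻¹

/-- `g₀ = (q⁴∑yᵢ + q²(y² + q + q²y⁻²) - q³(y + qy⁻¹)∑yᵢ⁻¹)/∏(1-yᵢq)` with `q = u²`. -/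
noncomputable def gZero : PowerSeries K :=
  (Cc sumY * u ^ 8 + (Cc (yv 3 ^ 2) * u ^ 4 + u ^ 6 + Cc (yv 3 ^ (-2 : ℤ)) * u ^ 8)
      - (Cc (yv 3) * u ^ 6 + Cc (yv 3)⁻¹ * u ^ 8) * Cc sumYinv) * D⁻¹

/-- For `k ≥ 1`, the single-particle character
`g_k = q³(q^{1+3k/2}χ_k(q^{-1/2}y)·∑yᵢ + q^{3k/2}χ_{k+2}(q^{-1/2}y)
  - q^{3(k+1)/2}χ_{k-1}(q^{-1/2}y) - q^{-1+3(k+1)/2}χ_{k+1}(q^{-1/2}y)·∑yᵢ⁻¹)/∏(1-yᵢq)`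
with `q = u²`. -/
noncomputable def gk (k : ℕ) : PowerSeries K :=
  u ^ 6 * (chiTerm (3 * k + 2) k * Cc sumY + chiTerm (3 * k) (k + 2)
      - chiTerm (3 * k + 3) (k - 1) - chiTerm (3 * k + 1) (k + 1) * Cc sumYinv) * D⁻¹

/-- The family `(g_k)_{k ≥ -1}` reindexed over `ℕ` (index `n` corresponds to
`k = n - 1`). -/
noncomputable def g : ℕ → PowerSeries K
  | 0 => gNegOne
  | 1 => gZero
  | (n + 2) => gk (n + 1)

/-- The formal sum `∑_{k=-1}^{∞} g_k`: since `g_k` has lowest order `u^{2k+4}`, its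
coefficients are defined by a stable truncation. -/
noncomputable def gSum : PowerSeries K :=
  PowerSeries.mk fun j => ∑ n ∈ Finset.range (j + 1), PowerSeries.coeff j (g n)

/-- The single-particle supergravity index
`f_sugra = (q⁴∑yᵢ - q²∑yᵢ⁻¹ + (1-q³)(yq + y⁻¹q²))
  / (∏(1-yᵢq)·(1-yq)(1-y⁻¹q²))` with `q = u²`. -/
noncomputable def fSugra : PowerSeries K :=
  (Cc sumY * u ^ 8 - Cc sumYinv * u ^ 4
      + (1 - u ^ 6) * (Cc (yv 3) * u ^ 2 + Cc (yv 3)⁻¹ * u ^ 4))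
    * (D * (1 - Cc (yv 3) * u ^ 2) * (1 - Cc (yv 3)⁻¹ * u ^ 4))⁻¹

section Aux

lemma hy3 : yv 3 ≠ 0 := by
  intro h
  have h2 : algebraMap (MvPolynomial (Fin 4) ℚ) K (MvPolynomial.X 3) =
      algebraMap (MvPolynomial (Fin 4) ℚ) K 0 := by simpa [yv] using h
  exact MvPolynomial.X_ne_zero (3 : Fin 4)
    (IsFractionRing.injective (MvPolynomial (Fin 4) ℚ) K h2)

lemma coeff_CX (a : K) (e n : ℕ) :
    PowerSeries.coeff n (Cc a * u ^ e) = if n = e then a else 0 := by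
  simpa [Cc] using PowerSeries.coeff_C_mul_X_pow a e n

/-- `f` has all coefficients below `p` equal to zero. -/
def OrdGe (p : ℕ) (f : PowerSeries K) : Prop := ∀ b < p, PowerSeries.coeff b f = 0

lemma OrdGe.mono {q : ℕ} {f : PowerSeries K} (hf : OrdGe q f) {p : ℕ} (h : p ≤ q) :
    OrdGe p f := fun b hb => hf b (lt_of_lt_of_le hb h)

lemma OrdGe.add {p : ℕ} {f g : PowerSeries K} (hf : OrdGe p f) (hg : OrdGe p g) :
    OrdGe p (f + g) := by
  intro b hb; rw [map_add, hf b hb, hg b hb, add_zero]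

lemma OrdGe.sub {p : ℕ} {f g : PowerSeries K} (hf : OrdGe p f) (hg : OrdGe p g) :
    OrdGe p (f - g) := by
  intro b hb; rw [map_sub, hf b hb, hg b hb, sub_zero]

lemma OrdGe.mul {p q : ℕ} {f g : PowerSeries K} (hf : OrdGe p f) (hg : OrdGe q g) :
    OrdGe (p + q) (f * g) := by
  intro b hb
  rw [PowerSeries.coeff_mul]
  apply Finset.sum_eq_zero
  intro x hx
  rw [Finset.HasAntidiagonal.mem_antidiagonal] at hx
  rcases lt_or_ge x.1 p with h | h
  · rw [hf x.1 h, zero_mul]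
  · rw [hg x.2 (by omega), mul_zero]

lemma OrdGe.mul_left {p : ℕ} {f : PowerSeries K} (hf : OrdGe p f) (g : PowerSeries K) :
    OrdGe p (g * f) := by
  intro b hb
  rw [PowerSeries.coeff_mul]
  apply Finset.sum_eq_zero
  intro x hx
  rw [Finset.HasAntidiagonal.mem_antidiagonal] at hx
  rw [hf x.2 (by omega), mul_zero]

lemma OrdGe.mul_right {p : ℕ} {f : PowerSeries K} (hf : OrdGe p f) (g : PowerSeries K) :
    OrdGe p (f * g) := by
  rw [mul_comm]; exact hf.mul_left g

lemma ordGe_CX (a : K) (e : ℕ) : OrdGe e (Cc a * u ^ e) := by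
  intro b hb; rw [coeff_CX]; simp [Nat.ne_of_lt hb]

lemma ordGe_Xpow (e : ℕ) : OrdGe e ((u : PowerSeries K) ^ e) := by
  intro b hb; simp [PowerSeries.coeff_X_pow, Nat.ne_of_lt hb]

lemma ordGe_chiTerm (m j : ℕ) : OrdGe (m - j) (chiTerm m j) := by
  intro b hb
  unfold chiTerm
  rw [map_sum]
  apply Finset.sum_eq_zero
  intro i _
  rw [coeff_CX]
  have : b ≠ m - j + 2 * i := by omega
  simp [this]

lemma X_pow_mul_chiTerm (e m j : ℕ) (h : j ≤ m) :
    u ^ e * chiTerm m j = chiTerm (m + e) j := by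
  unfold chiTerm
  rw [Finset.mul_sum]
  refine Finset.sum_congr rfl fun i _ => ?_
  rw [show m + e - j + 2 * i = (m - j + 2 * i) + e by omega, pow_add]
  ring

noncomputable def cS (n : ℕ) : PowerSeries K := chiTerm (3 * n) n

noncomputable def sPart (N : ℕ) : PowerSeries K := ∑ n ∈ Finset.range N, cS n

lemma cS_zero : cS 0 = 1 := by
  unfold cS chiTerm
  simp

lemma cS_one : cS 1 = Cc (yv 3) * u ^ 2 + Cc (yv 3)⁻¹ * u ^ 4 := by
  unfold cS chiTerm
  rw [Finset.sum_range_succ, Finset.sum_range_one]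
  norm_num

lemma cS_two : cS 2 = Cc (yv 3 ^ 2) * u ^ 4 + u ^ 6 + Cc (yv 3 ^ (-2 : ℤ)) * u ^ 8 := by
  unfold cS chiTerm
  rw [Finset.sum_range_succ, Finset.sum_range_succ, Finset.sum_range_one]
  norm_num

end Aux

section Aux2

lemma hCy : Cc (yv 3) * Cc (yv 3)⁻¹ = (1 : PowerSeries K) := by
  rw [← map_mul, mul_inv_cancel₀ hy3, map_one]

noncomputable def Eq1 : PowerSeries K := 1 - Cc (yv 3) * u ^ 2
noncomputable def Fq1 : PowerSeries K := 1 - Cc (yv 3)⁻¹ * u ^ 4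

lemma EF_expand : Eq1 * Fq1 = 1 - Cc (yv 3) * u ^ 2 - Cc (yv 3)⁻¹ * u ^ 4 + u ^ 6 := by
  unfold Eq1 Fq1
  linear_combination (u : PowerSeries K) ^ 6 * hCy

lemma chi_rec (k : ℕ) :
    Cc (yv 3) * u ^ 2 * chiTerm (3 * (k + 1)) (k + 1)
      + Cc (yv 3)⁻¹ * (u ^ 4 * chiTerm (3 * (k + 1)) (k + 1))
    = chiTerm (3 * k + 6) (k + 2) + chiTerm (3 * k + 6) k := by
  have h1 : Cc (yv 3) * u ^ 2 * chiTerm (3 * (k + 1)) (k + 1)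
      = ∑ i ∈ Finset.range (k + 2), Cc (yv 3 ^ ((k : ℤ) + 2 - 2 * i)) * u ^ (2 * k + 4 + 2 * i) := by
    unfold chiTerm
    rw [Finset.mul_sum]
    refine Finset.sum_congr rfl fun i hi => ?_
    have e1 : yv 3 ^ ((k : ℤ) + 2 - 2 * i) = yv 3 * yv 3 ^ (((k + 1 : ℕ) : ℤ) - 2 * i) := by
      rw [← zpow_one_add₀ hy3]
      congr 1
      push_cast
      ring
    rw [e1, map_mul,
      show 2 * k + 4 + 2 * i = 2 + (3 * (k + 1) - (k + 1) + 2 * i) by omega, pow_add]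
    ring
  have h2 : Cc (yv 3)⁻¹ * (u ^ 4 * chiTerm (3 * (k + 1)) (k + 1))
      = ∑ i ∈ Finset.range (k + 2),
          Cc (yv 3 ^ ((k : ℤ) + 2 - 2 * ((i : ℕ) + 1))) * u ^ (2 * k + 4 + 2 * (i + 1)) := by
    unfold chiTerm
    rw [Finset.mul_sum, Finset.mul_sum]
    refine Finset.sum_congr rfl fun i hi => ?_
    have e1 : yv 3 ^ ((k : ℤ) + 2 - 2 * ((i : ℕ) + 1))
        = (yv 3)⁻¹ * yv 3 ^ (((k + 1 : ℕ) : ℤ) - 2 * i) := by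
      rw [← zpow_neg_one (yv 3), ← zpow_add₀ hy3]
      congr 1
      push_cast
      ring
    rw [e1, map_mul,
      show 2 * k + 4 + 2 * (i + 1) = 4 + (3 * (k + 1) - (k + 1) + 2 * i) by omega, pow_add]
    ring
  have h3 : chiTerm (3 * k + 6) (k + 2)
      = ∑ i ∈ Finset.range (k + 3), Cc (yv 3 ^ ((k : ℤ) + 2 - 2 * i)) * u ^ (2 * k + 4 + 2 * i) := by
    unfold chiTerm
    refine Finset.sum_congr rfl fun i hi => ?_
    congr 2
    all_goals try omega
    all_goals (push_cast; ring)
  have h4 : chiTerm (3 * k + 6) k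
      = ∑ i ∈ Finset.range (k + 1),
          Cc (yv 3 ^ ((k : ℤ) + 2 - 2 * ((i : ℕ) + 1))) * u ^ (2 * k + 4 + 2 * (i + 1)) := by
    unfold chiTerm
    refine Finset.sum_congr rfl fun i hi => ?_
    congr 2
    all_goals try omega
    all_goals (push_cast; ring)
  rw [h1, h2, h3, h4,
    Finset.sum_range_succ
      (fun i => Cc (yv 3 ^ ((k : ℤ) + 2 - 2 * ((i : ℕ) + 1))) * u ^ (2 * k + 4 + 2 * (i + 1)))
      (k + 1),
    Finset.sum_range_succ
      (fun i => Cc (yv 3 ^ ((k : ℤ) + 2 - 2 * i)) * u ^ (2 * k + 4 + 2 * i)) (k + 2)]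
  have : ((k : ℤ) + 2 - 2 * ((k + 1 : ℕ) + 1)) = ((k : ℤ) + 2 - 2 * ((k + 2 : ℕ))) := by
    push_cast; ring
  rw [show (2 * k + 4 + 2 * (k + 1 + 1)) = 2 * k + 4 + 2 * (k + 2) by omega]
  push_cast
  abel

lemma chiTerm31 : chiTerm 3 1 = Cc (yv 3) * u ^ 2 + Cc (yv 3)⁻¹ * u ^ 4 := cS_one

lemma chiTerm60 : chiTerm 6 0 = u ^ 6 := by
  unfold chiTerm
  simp

lemma EF_sPart (N : ℕ) : Eq1 * Fq1 * sPart (N + 1)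
    = 1 - chiTerm (3 * N + 3) (N + 1) + chiTerm (3 * N + 6) N := by
  induction N with
  | zero =>
    have hs : sPart 1 = 1 := by
      unfold sPart; rw [Finset.sum_range_one, cS_zero]
    show Eq1 * Fq1 * sPart 1 = 1 - chiTerm 3 1 + chiTerm 6 0
    rw [hs, mul_one, EF_expand, chiTerm31, chiTerm60]
    ring
  | succ N ih =>
    have hs : sPart (N + 1 + 1) = sPart (N + 1) + cS (N + 1) := Finset.sum_range_succ _ _
    rw [hs, mul_add, ih, EF_expand]
    have hrec := chi_rec N
    have hshift : u ^ 6 * chiTerm (3 * (N + 1)) (N + 1) = chiTerm (3 * N + 9) (N + 1) := by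
      rw [X_pow_mul_chiTerm 6 (3 * (N + 1)) (N + 1) (by omega)]
      congr 1 <;> omega
    have hcS : cS (N + 1) = chiTerm (3 * (N + 1)) (N + 1) := rfl
    have hidx : chiTerm (3 * N + 3) (N + 1) = chiTerm (3 * (N + 1)) (N + 1) := by
      congr 1 <;> omega
    rw [show 3 * (N + 1) + 3 = 3 * N + 6 by ring, show 3 * (N + 1) + 6 = 3 * N + 9 by ring,
      hcS, hidx]
    linear_combination hshift - hrec
end Aux2

section Aux3

noncomputable def numer : ℕ → PowerSeries K
  | 0 => Cc (yv 3) * u ^ 2 + Cc (yv 3)⁻¹ * u ^ 4 - Cc sumYinv * u ^ 4 + u ^ 6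
  | 1 => Cc sumY * u ^ 8 + (Cc (yv 3 ^ 2) * u ^ 4 + u ^ 6 + Cc (yv 3 ^ (-2 : ℤ)) * u ^ 8)
      - (Cc (yv 3) * u ^ 6 + Cc (yv 3)⁻¹ * u ^ 8) * Cc sumYinv
  | (n + 2) => u ^ 6 * (chiTerm (3 * (n + 1) + 2) (n + 1) * Cc sumY
      + chiTerm (3 * (n + 1)) (n + 3)
      - chiTerm (3 * (n + 1) + 3) n - chiTerm (3 * (n + 1) + 1) (n + 2) * Cc sumYinv)

lemma g_eq : ∀ n : ℕ, g n = numer n * D⁻¹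
  | 0 => rfl
  | 1 => rfl
  | (n + 2) => rfl

lemma numer_low (n : ℕ) : OrdGe n (numer n) := by
  match n with
  | 0 => exact fun b hb => absurd hb (Nat.not_lt_zero b)
  | 1 =>
    refine OrdGe.mono ?_ (show (1:ℕ) ≤ 4 by norm_num)
    show OrdGe 4 (Cc sumY * u ^ 8 + (Cc (yv 3 ^ 2) * u ^ 4 + u ^ 6 + Cc (yv 3 ^ (-2 : ℤ)) * u ^ 8)
      - (Cc (yv 3) * u ^ 6 + Cc (yv 3)⁻¹ * u ^ 8) * Cc sumYinv)
    refine OrdGe.sub (OrdGe.add ?_ (OrdGe.add (OrdGe.add ?_ ?_) ?_)) (OrdGe.mul_right ?_ _)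
    · exact (ordGe_CX sumY 8).mono (by norm_num)
    · exact (ordGe_CX _ 4).mono (by norm_num)
    · exact (ordGe_Xpow 6).mono (by norm_num)
    · exact (ordGe_CX _ 8).mono (by norm_num)
    · exact OrdGe.add ((ordGe_CX _ 6).mono (by norm_num)) ((ordGe_CX _ 8).mono (by norm_num))
  | (n + 2) =>
    refine OrdGe.mono ?_ (show n + 2 ≤ 6 + 2 * n by omega)
    show OrdGe (6 + 2 * n) (u ^ 6 * (chiTerm (3 * (n + 1) + 2) (n + 1) * Cc sumY
      + chiTerm (3 * (n + 1)) (n + 3)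
      - chiTerm (3 * (n + 1) + 3) n - chiTerm (3 * (n + 1) + 1) (n + 2) * Cc sumYinv))
    refine OrdGe.mul (ordGe_Xpow 6) ?_
    refine OrdGe.sub (OrdGe.sub (OrdGe.add ?_ ?_) ?_) ?_
    · exact OrdGe.mul_right ((ordGe_chiTerm _ _).mono (by omega)) _
    · exact (ordGe_chiTerm (3 * (n + 1)) (n + 3)).mono (by omega)
    · exact (ordGe_chiTerm (3 * (n + 1) + 3) n).mono (by omega)
    · exact OrdGe.mul_right ((ordGe_chiTerm (3 * (n + 1) + 1) (n + 2)).mono (by omega)) _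

lemma hD0 : PowerSeries.constantCoeff D ≠ 0 := by
  unfold D
  simp [Cc]

lemma g_low (n : ℕ) : OrdGe n (g n) := by
  rw [g_eq]
  exact (numer_low n).mul_right _

lemma coeff_truncSum_mul (Fm : ℕ → PowerSeries K) (hF : ∀ n, OrdGe n (Fm n))
    (W : PowerSeries K) (j M : ℕ) (hM : j < M) :
    PowerSeries.coeff j
      ((PowerSeries.mk fun i => ∑ n ∈ Finset.range (i + 1), PowerSeries.coeff i (Fm n)) * W)
      = PowerSeries.coeff j ((∑ n ∈ Finset.range M, Fm n) * W) := by
  rw [PowerSeries.coeff_mul, PowerSeries.coeff_mul]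
  refine Finset.sum_congr rfl fun p hp => ?_
  rw [Finset.HasAntidiagonal.mem_antidiagonal] at hp
  congr 1
  rw [PowerSeries.coeff_mk, map_sum]
  refine Finset.sum_subset (Finset.range_subset_range.mpr (by omega)) ?_
  intro x hx hx2
  rw [Finset.mem_range] at hx hx2
  exact hF x p.1 (by omega)

lemma numer_succ (n : ℕ) : numer (n + 2)
    = Cc sumY * (u ^ 8 * cS (n + 1)) - Cc sumYinv * (u ^ 4 * cS (n + 2))
      + (cS (n + 3) - u ^ 12 * cS n) := by
  have A1 : u ^ 6 * chiTerm (3 * (n + 1) + 2) (n + 1) = u ^ 8 * cS (n + 1) := by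
    have h := X_pow_mul_chiTerm 2 (3 * (n + 1)) (n + 1) (by omega)
    have hcs : cS (n + 1) = chiTerm (3 * (n + 1)) (n + 1) := rfl
    rw [hcs, ← h]
    ring
  have A2 : u ^ 6 * chiTerm (3 * (n + 1)) (n + 3) = cS (n + 3) := by
    rw [X_pow_mul_chiTerm 6 (3 * (n + 1)) (n + 3) (by omega)]
    show _ = chiTerm (3 * (n + 3)) (n + 3)
    congr 1 <;> omega
  have A3 : u ^ 6 * chiTerm (3 * (n + 1) + 3) n = u ^ 12 * cS n := by
    have h := X_pow_mul_chiTerm 6 (3 * n) n (by omega)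
    have hidx : chiTerm (3 * (n + 1) + 3) n = chiTerm (3 * n + 6) n := by congr 1 <;> omega
    have hcs : cS n = chiTerm (3 * n) n := rfl
    rw [hidx, ← h, hcs]
    ring
  have A4 : u ^ 6 * chiTerm (3 * (n + 1) + 1) (n + 2) = u ^ 4 * cS (n + 2) := by
    have h := X_pow_mul_chiTerm 2 (3 * (n + 1) + 1) (n + 2) (by omega)
    have hidx : chiTerm (3 * (n + 1) + 1 + 2) (n + 2) = chiTerm (3 * (n + 2)) (n + 2) := by
      congr 1 <;> omega
    have hcs : cS (n + 2) = chiTerm (3 * (n + 2)) (n + 2) := rfl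
    rw [hcs, ← hidx, ← h]
    ring
  have hnum : numer (n + 2) = u ^ 6 * (chiTerm (3 * (n + 1) + 2) (n + 1) * Cc sumY
      + chiTerm (3 * (n + 1)) (n + 3)
      - chiTerm (3 * (n + 1) + 3) n - chiTerm (3 * (n + 1) + 1) (n + 2) * Cc sumYinv) := rfl
  rw [hnum]
  linear_combination Cc sumY * A1 + A2 - A3 - Cc sumYinv * A4

lemma numer_sum (M : ℕ) : ∑ n ∈ Finset.range (M + 2), numer n
    = Cc sumY * (u ^ 8 * sPart (M + 1)) - Cc sumYinv * (u ^ 4 * sPart (M + 2))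
      + (u ^ 6 + sPart (M + 3) - 1 - u ^ 12 * sPart M) := by
  induction M with
  | zero =>
    have h0 : numer 0 = Cc (yv 3) * u ^ 2 + Cc (yv 3)⁻¹ * u ^ 4 - Cc sumYinv * u ^ 4 + u ^ 6 :=
      rfl
    have h1 : numer 1 = Cc sumY * u ^ 8
        + (Cc (yv 3 ^ 2) * u ^ 4 + u ^ 6 + Cc (yv 3 ^ (-2 : ℤ)) * u ^ 8)
        - (Cc (yv 3) * u ^ 6 + Cc (yv 3)⁻¹ * u ^ 8) * Cc sumYinv := rfl
    have hr : ∑ n ∈ Finset.range (0 + 2), numer n = numer 0 + numer 1 := by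
      rw [show (0 : ℕ) + 2 = 1 + 1 from rfl, Finset.sum_range_succ, Finset.sum_range_one]
    have hs0 : sPart (0 : ℕ) = 0 := rfl
    have hs1 : sPart (0 + 1) = 1 := by
      unfold sPart; rw [Finset.sum_range_one, cS_zero]
    have hs2 : sPart (0 + 2) = 1 + cS 1 := by
      unfold sPart
      rw [show (0 : ℕ) + 2 = 1 + 1 from rfl, Finset.sum_range_succ, Finset.sum_range_one,
        cS_zero]
    have hs3 : sPart (0 + 3) = 1 + cS 1 + cS 2 := by
      unfold sPart
      rw [show (0 : ℕ) + 3 = 2 + 1 from rfl, Finset.sum_range_succ,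
        show (2 : ℕ) = 1 + 1 from rfl, Finset.sum_range_succ, Finset.sum_range_one, cS_zero]
    rw [hr, h0, h1, hs0, hs1, hs2, hs3, cS_one, cS_two]
    ring
  | succ M ih =>
    simp only [show M + 1 + 1 = M + 2 from rfl, show M + 1 + 2 = M + 3 from rfl,
      show M + 1 + 3 = M + 4 from rfl]
    have hsum : ∑ n ∈ Finset.range (M + 3), numer n
        = (∑ n ∈ Finset.range (M + 2), numer n) + numer (M + 2) :=
      Finset.sum_range_succ numer (M + 2)
    have es1 : sPart (M + 2) = sPart (M + 1) + cS (M + 1) := Finset.sum_range_succ cS (M + 1)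
    have es2 : sPart (M + 3) = sPart (M + 2) + cS (M + 2) := Finset.sum_range_succ cS (M + 2)
    have es3 : sPart (M + 4) = sPart (M + 3) + cS (M + 3) := Finset.sum_range_succ cS (M + 3)
    have es4 : sPart (M + 1) = sPart M + cS M := Finset.sum_range_succ cS M
    rw [hsum, ih, numer_succ M, es3, es2, es1, es4]
    ring

end Aux3

section Aux4

lemma main2 (j : ℕ) :
    PowerSeries.coeff j ((∑ n ∈ Finset.range (j + 3), numer n) * (Eq1 * Fq1))
      = PowerSeries.coeff j (Cc sumY * u ^ 8 - Cc sumYinv * u ^ 4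
          + (1 - u ^ 6) * (Cc (yv 3) * u ^ 2 + Cc (yv 3)⁻¹ * u ^ 4)) := by
  have hns : ∑ n ∈ Finset.range (j + 3), numer n
      = Cc sumY * (u ^ 8 * sPart (j + 2)) - Cc sumYinv * (u ^ 4 * sPart (j + 3))
        + (u ^ 6 + sPart (j + 4) - 1 - u ^ 12 * sPart (j + 1)) := by
    have h := numer_sum (j + 1)
    simpa only [show j + 1 + 1 = j + 2 from rfl, show j + 1 + 2 = j + 3 from rfl,
      show j + 1 + 3 = j + 4 from rfl] using h
  have h1 : Eq1 * Fq1 * sPart (j + 2)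
      = 1 - chiTerm (3 * (j + 1) + 3) (j + 2) + chiTerm (3 * (j + 1) + 6) (j + 1) := by
    have h := EF_sPart (j + 1)
    simpa only [show j + 1 + 1 = j + 2 from rfl] using h
  have h2 : Eq1 * Fq1 * sPart (j + 3)
      = 1 - chiTerm (3 * (j + 2) + 3) (j + 3) + chiTerm (3 * (j + 2) + 6) (j + 2) := by
    have h := EF_sPart (j + 2)
    simpa only [show j + 2 + 1 = j + 3 from rfl] using h
  have h3 : Eq1 * Fq1 * sPart (j + 4)
      = 1 - chiTerm (3 * (j + 3) + 3) (j + 4) + chiTerm (3 * (j + 3) + 6) (j + 3) := by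
    have h := EF_sPart (j + 3)
    simpa only [show j + 3 + 1 = j + 4 from rfl] using h
  have h4 : Eq1 * Fq1 * sPart (j + 1)
      = 1 - chiTerm (3 * j + 3) (j + 1) + chiTerm (3 * j + 6) j := EF_sPart j
  have hprod : (∑ n ∈ Finset.range (j + 3), numer n) * (Eq1 * Fq1)
      = (Cc sumY * u ^ 8 - Cc sumYinv * u ^ 4
          + (1 - u ^ 6) * (Cc (yv 3) * u ^ 2 + Cc (yv 3)⁻¹ * u ^ 4))
        + (Cc sumY * u ^ 8
            * (chiTerm (3 * (j + 1) + 6) (j + 1) - chiTerm (3 * (j + 1) + 3) (j + 2))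
          - Cc sumYinv * u ^ 4
            * (chiTerm (3 * (j + 2) + 6) (j + 2) - chiTerm (3 * (j + 2) + 3) (j + 3))
          + (chiTerm (3 * (j + 3) + 6) (j + 3) - chiTerm (3 * (j + 3) + 3) (j + 4))
          - u ^ 12 * (chiTerm (3 * j + 6) j - chiTerm (3 * j + 3) (j + 1))) := by
    rw [hns]
    linear_combination (Cc sumY * u ^ 8) * h1 - (Cc sumYinv * u ^ 4) * h2 + h3 - u ^ 12 * h4
      + ((u : PowerSeries K) ^ 6 - 1) * EF_expand
  rw [hprod, map_add]
  have hRem : OrdGe (j + 1)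
      (Cc sumY * u ^ 8
            * (chiTerm (3 * (j + 1) + 6) (j + 1) - chiTerm (3 * (j + 1) + 3) (j + 2))
          - Cc sumYinv * u ^ 4
            * (chiTerm (3 * (j + 2) + 6) (j + 2) - chiTerm (3 * (j + 2) + 3) (j + 3))
          + (chiTerm (3 * (j + 3) + 6) (j + 3) - chiTerm (3 * (j + 3) + 3) (j + 4))
          - u ^ 12 * (chiTerm (3 * j + 6) j - chiTerm (3 * j + 3) (j + 1))) := by
    refine OrdGe.sub (OrdGe.add (OrdGe.sub ?_ ?_) ?_) ?_
    · exact (OrdGe.sub ((ordGe_chiTerm _ _).mono (by omega))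
        ((ordGe_chiTerm _ _).mono (by omega))).mul_left _
    · exact (OrdGe.sub ((ordGe_chiTerm _ _).mono (by omega))
        ((ordGe_chiTerm _ _).mono (by omega))).mul_left _
    · exact OrdGe.sub ((ordGe_chiTerm _ _).mono (by omega))
        ((ordGe_chiTerm _ _).mono (by omega))
    · exact (OrdGe.sub ((ordGe_chiTerm _ _).mono (by omega))
        ((ordGe_chiTerm _ _).mono (by omega))).mul_left _
  rw [hRem j (by omega), add_zero]

end Aux4

/-- Holographic matching: `∑_{k=-1}^{∞} g_k = f_sugra` as formal power series in
`u = q^{1/2}`. -/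
theorem sum_gk_eq_sugra_index : gSum = fSugra := by
  have hDEF0 : PowerSeries.constantCoeff
      (D * (1 - Cc (yv 3) * u ^ 2) * (1 - Cc (yv 3)⁻¹ * u ^ 4)) ≠ 0 := by
    unfold D
    simp [Cc]
  unfold fSugra
  rw [PowerSeries.eq_mul_inv_iff_mul_eq hDEF0]
  have hstep : gSum * (D * (1 - Cc (yv 3) * u ^ 2) * (1 - Cc (yv 3)⁻¹ * u ^ 4))
      = (gSum * D) * (Eq1 * Fq1) := by
    unfold Eq1 Fq1
    ring
  rw [hstep]
  have hgD : gSum * D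
      = PowerSeries.mk fun i => ∑ n ∈ Finset.range (i + 1), PowerSeries.coeff i (numer n) := by
    ext j
    unfold gSum
    rw [coeff_truncSum_mul g g_low D j (j + 1) (by omega), PowerSeries.coeff_mk]
    have hD : (∑ n ∈ Finset.range (j + 1), g n) * D = ∑ n ∈ Finset.range (j + 1), numer n := by
      rw [Finset.sum_mul]
      refine Finset.sum_congr rfl fun n _ => ?_
      rw [g_eq n, mul_assoc, PowerSeries.inv_mul_cancel D hD0, mul_one]
    rw [hD, map_sum]
  rw [hgD]
  ext j
  rw [coeff_truncSum_mul numer numer_low (Eq1 * Fq1) j (j + 3) (by omega)]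
  exact main2 j

end SugraLargeN
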